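/- Let f ∈ C¹[a,b] be nonvanishing on [a,b] and let X̃⁽ⁿ⁾, X⁽ⁿ⁾ be the recursive integrals based at x₀ ∈ [a,b]. Then the identity (f X̃⁽²ᵏ⁾)″ + q (f X̃⁽²ᵏ⁾) = 2k(2k-1) f X̃⁽²ᵏ⁻²⁾ holds on (a,b) for k ≥ 1, where q = -f″/f and f ∈ C² on (a,b). -/

import Mathlib

open MeasureTheory Set

/-- `X̃⁽ⁿ⁾`: `X̃⁽⁰⁾ ≡ 1`, `X̃⁽ⁿ⁾(x) = n ∫_{x₀}^x X̃⁽ⁿ⁻¹⁾(s) (f²(s))^{(-1)^{n-1}} ds`. -/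
noncomputable def Xt (f : ℝ → ℂ) (x₀ : ℝ) : ℕ → ℝ → ℂ
  | 0 => fun _ => 1
  | n + 1 => fun x => (n + 1 : ℂ) * ∫ s in x₀..x, Xt f x₀ n s * (f s ^ 2) ^ ((-1 : ℤ) ^ n)

/-- `X⁽ⁿ⁾`: `X⁽⁰⁾ ≡ 1`, `X⁽ⁿ⁾(x) = n ∫_{x₀}^x X⁽ⁿ⁻¹⁾(s) (f²(s))^{(-1)^n} ds`. -/
noncomputable def Xo (f : ℝ → ℂ) (x₀ : ℝ) : ℕ → ℝ → ℂ
  | 0 => fun _ => 1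
  | n + 1 => fun x => (n + 1 : ℂ) * ∫ s in x₀..x, Xo f x₀ n s * (f s ^ 2) ^ ((-1 : ℤ) ^ (n + 1))

/-- `ψ_k = X⁽ᵏ⁾` for `k` odd, `ψ_k = X̃⁽ᵏ⁾` for `k` even. -/
noncomputable def psi (f : ℝ → ℂ) (x₀ : ℝ) (k : ℕ) : ℝ → ℂ :=
  if Odd k then Xo f x₀ k else Xt f x₀ k

/-- Generalized derivatives: `γ₀(h) = h`, `γ_k(h) = φ^{(-1)^{k-1}} (γ_{k-1}(h))′`. -/
noncomputable def gammaD (φ : ℝ → ℂ) : ℕ → (ℝ → ℂ) → ℝ → ℂ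
  | 0, h => h
  | k + 1, h => fun x => φ x ^ ((-1 : ℤ) ^ k) * deriv (gammaD φ k h) x

section Aux

variable {a b x₀ : ℝ} {f : ℝ → ℂ}

lemma Xt_integrand_contOn (hf : ContinuousOn f (Set.Icc a b))
    (hf0 : ∀ x ∈ Set.Icc a b, f x ≠ 0) (n : ℕ)
    (ih : ContinuousOn (Xt f x₀ n) (Set.Icc a b)) :
    ContinuousOn (fun s => Xt f x₀ n s * (f s ^ 2) ^ ((-1 : ℤ) ^ n)) (Set.Icc a b) :=
  ih.mul <| ((hf.pow 2).zpow₀ _ fun x hx => Or.inl (pow_ne_zero 2 (hf0 x hx)))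

lemma Xt_contOn (hab : a ≤ b) (hx₀ : x₀ ∈ Set.Icc a b)
    (hf : ContinuousOn f (Set.Icc a b)) (hf0 : ∀ x ∈ Set.Icc a b, f x ≠ 0) :
    ∀ n, ContinuousOn (Xt f x₀ n) (Set.Icc a b) := by
  intro n
  induction n with
  | zero => exact continuousOn_const
  | succ n ih =>
    have hg := Xt_integrand_contOn hf hf0 n ih
    have huIcc : Set.uIcc a b = Set.Icc a b := Set.uIcc_of_le hab
    have hint : IntervalIntegrable
        (fun s => Xt f x₀ n s * (f s ^ 2) ^ ((-1 : ℤ) ^ n)) volume a b := by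
      apply ContinuousOn.intervalIntegrable
      rwa [huIcc]
    have := intervalIntegral.continuousOn_primitive_interval' hint (by rwa [huIcc])
    rw [huIcc] at this
    show ContinuousOn (fun x => (n + 1 : ℂ) * _) (Set.Icc a b)
    exact continuousOn_const.mul this

lemma Xt_hasDerivAt (hab : a ≤ b) (hx₀ : x₀ ∈ Set.Icc a b)
    (hf : ContinuousOn f (Set.Icc a b)) (hf0 : ∀ x ∈ Set.Icc a b, f x ≠ 0)
    (n : ℕ) {x : ℝ} (hx : x ∈ Set.Ioo a b) :
    HasDerivAt (Xt f x₀ (n + 1))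
      ((n + 1 : ℂ) * (Xt f x₀ n x * (f x ^ 2) ^ ((-1 : ℤ) ^ n))) x := by
  have hg := Xt_integrand_contOn (x₀ := x₀) hf hf0 n
    (Xt_contOn hab hx₀ hf hf0 n)
  have hxI : x ∈ Set.Icc a b := Set.Ioo_subset_Icc_self hx
  have hint : IntervalIntegrable
      (fun s => Xt f x₀ n s * (f s ^ 2) ^ ((-1 : ℤ) ^ n)) volume x₀ x := by
    apply ContinuousOn.intervalIntegrable
    exact hg.mono (Set.uIcc_subset_Icc hx₀ hxI)
  have hmeas := (hg.mono Set.Ioo_subset_Icc_self).stronglyMeasurableAtFilter (μ := volume)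
    isOpen_Ioo x hx
  have hcont : ContinuousAt (fun s => Xt f x₀ n s * (f s ^ 2) ^ ((-1 : ℤ) ^ n)) x :=
    (hg x hxI).continuousAt (Icc_mem_nhds hx.1 hx.2)
  have := (intervalIntegral.integral_hasDerivAt_right hint hmeas hcont).const_mul
    ((n : ℂ) + 1)
  exact this

end Aux

/-- Termwise identity: `(f X̃⁽²ᵏ⁾)″ + q (f X̃⁽²ᵏ⁾) = 2k(2k-1) f X̃⁽²ᵏ⁻²⁾` on `(a,b)`. -/
theorem termwise_identity_Xt
    (a b x₀ : ℝ) (hab : a < b) (hx₀ : x₀ ∈ Set.Icc a b)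
    (f : ℝ → ℂ)
    (hf1 : ContDiffOn ℝ 1 f (Set.Icc a b))
    (hf2 : ContDiffOn ℝ 2 f (Set.Ioo a b))
    (hf0 : ∀ x ∈ Set.Icc a b, f x ≠ 0) :
    ∀ k : ℕ, 1 ≤ k → ∀ x ∈ Set.Ioo a b,
      deriv (deriv (fun y => f y * Xt f x₀ (2 * k) y)) x +
        (-(deriv (deriv f) x) / f x) * (f x * Xt f x₀ (2 * k) x) =
      (2 * k : ℂ) * (2 * k - 1 : ℂ) * f x * Xt f x₀ (2 * k - 2) x := by
  intro k hk x hx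
  obtain ⟨m, rfl⟩ : ∃ m, k = m + 1 := ⟨k - 1, (Nat.succ_pred_eq_of_pos hk).symm⟩
  have h2k : 2 * (m + 1) = 2 * m + 1 + 1 := by ring
  have h2k2 : 2 * (m + 1) - 2 = 2 * m := by omega
  rw [h2k2, h2k]
  have hcf : ContinuousOn f (Set.Icc a b) := hf1.continuousOn
  have hxI : x ∈ Set.Icc a b := Set.Ioo_subset_Icc_self hx
  have hfx : f x ≠ 0 := hf0 x hxI
  -- derivative of f on Ioo
  have hfd : ∀ y ∈ Set.Ioo a b, HasDerivAt f (deriv f y) y := fun y hy =>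
    ((hf2.differentiableOn (by norm_num)).differentiableAt
      (isOpen_Ioo.mem_nhds hy)).hasDerivAt
  -- derivative of Xt (2m+2) on Ioo
  have hX2 : ∀ y ∈ Set.Ioo a b, HasDerivAt (Xt f x₀ (2 * m + 1 + 1))
      (((2 * m + 1 : ℕ) + 1 : ℂ) * (Xt f x₀ (2 * m + 1) y * (f y ^ 2)⁻¹)) y := by
    intro y hy
    have := Xt_hasDerivAt hab.le hx₀ hcf hf0 (2 * m + 1) hy
    rwa [show ((-1 : ℤ) ^ (2 * m + 1)) = -1 from Odd.neg_one_pow ⟨m, by ring⟩,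
      zpow_neg_one] at this
  -- derivative of Xt (2m+1) at x
  have hX1 : HasDerivAt (Xt f x₀ (2 * m + 1))
      (((2 * m : ℕ) + 1 : ℂ) * (Xt f x₀ (2 * m) x * f x ^ 2)) x := by
    have := Xt_hasDerivAt hab.le hx₀ hcf hf0 (2 * m) hx
    rwa [show ((-1 : ℤ) ^ (2 * m)) = 1 from Even.neg_one_pow ⟨m, by ring⟩,
      zpow_one] at this
  -- first derivative of u = f * Xt(2m+2) equals v on Ioo
  set v : ℝ → ℂ := fun y => deriv f y * Xt f x₀ (2 * m + 1 + 1) y +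
    ((2 * m + 1 : ℕ) + 1 : ℂ) * Xt f x₀ (2 * m + 1) y * (f y)⁻¹ with hv
  have huv : ∀ y ∈ Set.Ioo a b, deriv (fun y => f y * Xt f x₀ (2 * m + 1 + 1) y) y = v y := by
    intro y hy
    have h := ((hfd y hy).mul (hX2 y hy)).deriv
    rw [show (fun y => f y * Xt f x₀ (2 * m + 1 + 1) y) = f * Xt f x₀ (2 * m + 1 + 1) from rfl, h, hv]
    have hfy : f y ≠ 0 := hf0 y (Set.Ioo_subset_Icc_self hy)
    field_simp
  -- rewrite second derivative
  have hEq : deriv (fun y => f y * Xt f x₀ (2 * m + 1 + 1) y) =ᶠ[nhds x] v :=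
    Filter.eventually_of_mem (isOpen_Ioo.mem_nhds hx) huv
  rw [hEq.deriv_eq]
  -- derivative of v at x
  have hdf2 : HasDerivAt (deriv f) (deriv (deriv f) x) x :=
    (((hf2.deriv_of_isOpen isOpen_Ioo (one_add_one_eq_two.le : (1 : WithTop ℕ∞) + 1 ≤ 2)).differentiableOn
      one_ne_zero).differentiableAt (isOpen_Ioo.mem_nhds hx)).hasDerivAt
  have hinv : HasDerivAt (fun y => (f y)⁻¹) (-(f x ^ 2)⁻¹ * deriv f x) x :=
    (hasDerivAt_inv hfx).comp x (hfd x hx)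
  have hvd : HasDerivAt v
      ((deriv (deriv f) x * Xt f x₀ (2 * m + 1 + 1) x +
        deriv f x * (((2 * m + 1 : ℕ) + 1 : ℂ) * (Xt f x₀ (2 * m + 1) x * (f x ^ 2)⁻¹))) +
       ((((2 * m + 1 : ℕ) + 1 : ℂ) * (((2 * m : ℕ) + 1 : ℂ) *
          (Xt f x₀ (2 * m) x * f x ^ 2))) * (f x)⁻¹ +
        (((2 * m + 1 : ℕ) + 1 : ℂ) * Xt f x₀ (2 * m + 1) x) * (-(f x ^ 2)⁻¹ * deriv f x))) x :=
    (hdf2.mul (hX2 x hx)).add ((hX1.const_mul _).mul hinv)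
  rw [hvd.deriv]
  push_cast
  field_simp [hfx]
  ring
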